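/- For every finite simple graph G, the hairing H(G) is absolutely palindromic. -/

import Mathlib

open Polynomial

/-- The characteristic polynomial (of the adjacency matrix) of a finite simple graph. -/
noncomputable def charPoly {V : Type*} [Finite V] (G : SimpleGraph V) : Polynomial ℤ :=
  letI := Fintype.ofFinite V
  letI := Classical.decEq V
  letI := Classical.decRel G.Adj
  (SimpleGraph.adjMatrix ℤ G).charpoly

/-- `G` is absolutely palindromic: `|a_i| = |a_(n-i)|` for all `i ≤ n`. -/
def IsAbsPalindromic {V : Type*} [Finite V] (G : SimpleGraph V) : Prop :=
  ∀ i ≤ Nat.card V, |(charPoly G).coeff i| = |(charPoly G).coeff (Nat.card V - i)|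

/-- The hairing of `G`: attach a pendant vertex to every vertex of `G`.
Vertices `(u, false)` form the original graph and `(u, true)` is the pendant at `u`. -/
def hairing {V : Type*} (G : SimpleGraph V) : SimpleGraph (V × Bool) where
  Adj a b := (a.2 = false ∧ b.2 = false ∧ G.Adj a.1 b.1) ∨ (a.1 = b.1 ∧ a.2 ≠ b.2)
  symm := by
    refine ⟨?_⟩
    rintro a b (⟨ha, hb, hadj⟩ | ⟨h1, h2⟩)
    · exact Or.inl ⟨hb, ha, hadj.symm⟩
    · exact Or.inr ⟨h1.symm, h2.symm⟩
  loopless := by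
    refine ⟨?_⟩
    rintro a (⟨_, _, hadj⟩ | ⟨_, h⟩)
    · exact hadj.ne rfl
    · exact h rfl

section Aux

lemma neg_one_pow_congr' {a b : ℕ} (h : a % 2 = b % 2) : ((-1:ℤ))^a = (-1)^b := by
  rcases Nat.even_or_odd a with ha | ha
  · rw [ha.neg_one_pow,
      (Nat.even_iff.mpr (by have := Nat.even_iff.mp ha; omega : b % 2 = 0)).neg_one_pow]
  · rw [ha.neg_one_pow,
      (Nat.odd_iff.mpr (by have := Nat.odd_iff.mp ha; omega : b % 2 = 1)).neg_one_pow]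

lemma hairing_aux_expand (n j : ℕ) : (X^2 - 1 : ℤ[X])^j * X^(n-j) =
    ∑ k ∈ Finset.range (j+1), C ((-1:ℤ)^(j-k) * (j.choose k)) * X^(2*k + (n-j)) := by
  rw [sub_eq_add_neg, add_pow, Finset.sum_mul]
  refine Finset.sum_congr rfl fun k hk => ?_
  simp only [map_mul, map_pow, map_neg, map_one, map_natCast]
  ring

lemma hairing_aux_sym (n j i : ℕ) (hj : j ≤ n) (hi : i ≤ 2*n) :
    ((X^2 - 1 : ℤ[X])^j * X^(n-j)).coeff (2*n - i)
      = (-1)^(n+i) * ((X^2 - 1 : ℤ[X])^j * X^(n-j)).coeff i := by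
  rw [hairing_aux_expand, finset_sum_coeff, finset_sum_coeff, Finset.mul_sum,
    ← Finset.sum_range_reflect]
  refine Finset.sum_congr rfl fun k hk => ?_
  have hk' : k ≤ j := by simpa using Nat.lt_succ_iff.mp (Finset.mem_range.mp hk)
  simp only [coeff_C_mul, coeff_X_pow, Nat.add_sub_cancel]
  by_cases h : i = 2*k + (n-j)
  · have h2 : 2*n - i = 2*(j-k) + (n-j) := by omega
    rw [if_pos h2, if_pos h, mul_one, mul_one, Nat.sub_sub_self hk',
      Nat.choose_symm hk']
    rw [← mul_assoc, ← pow_add]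
    congr 1
    exact neg_one_pow_congr' (by omega)
  · have h2 : ¬(2*n - i = 2*(j-k) + (n-j)) := by omega
    rw [if_neg h2, if_neg h]; ring

open Matrix in
lemma hairing_aux_blocks {V : Type*} [Fintype V] [DecidableEq V] (A : Matrix V V ℤ) :
    (Matrix.fromBlocks A (1 : Matrix V V ℤ) (1 : Matrix V V ℤ) (0 : Matrix V V ℤ)).charpoly =
      ∑ j ∈ Finset.range (Fintype.card V + 1),
        C (A.charpoly.coeff j) * (X^2 - 1)^j * X^(Fintype.card V - j) := by
  set n := Fintype.card V with hn
  set K := FractionRing (Polynomial ℤ)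
  set φ : Polynomial ℤ →+* K := (algebraMap (Polynomial ℤ) K : Polynomial ℤ →+* K) with hφ
  have hinj : Function.Injective φ := IsFractionRing.injective (Polynomial ℤ) K
  apply hinj
  set x : K := φ X with hx
  have hx0 : x ≠ 0 := fun h => X_ne_zero (hinj (by simpa [hx] using h))
  -- RHS image
  have hC : ∀ m : ℤ, φ (C m) = (m : K) := fun m => by
    exact_mod_cast congrFun (congrArg DFunLike.coe (RingHom.ext_int
      (φ.comp (Int.castRingHom (Polynomial ℤ))) (Int.castRingHom K))) m
  have hRHS : φ (∑ j ∈ Finset.range (n + 1),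
        C (A.charpoly.coeff j) * (X^2 - 1)^j * X^(n - j))
      = ∑ j ∈ Finset.range (n + 1),
        ((A.charpoly.coeff j : K)) * (x^2 - 1)^j * x^(n - j) := by
    rw [map_sum]
    exact Finset.sum_congr rfl fun j _ => by
      simp [_root_.map_mul, map_pow, _root_.map_sub, _root_.map_one, hC, hx]
  rw [hRHS]
  -- LHS: determinant computation
  set P : Matrix V V K := (charmatrix A).map φ with hP
  set D : Matrix V V K := Matrix.diagonal (fun _ : V => x) with hD
  have hcm : (charmatrix (Matrix.fromBlocks A (1 : Matrix V V ℤ) (1 : Matrix V V ℤ)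
      (0 : Matrix V V ℤ))).map φ = Matrix.fromBlocks P (-1) (-1) D := by
    have h1 : ((-(Matrix.map (1 : Matrix V V ℤ) (⇑C))).map φ) = (-1 : Matrix V V K) := by
      ext i j
      simp [Matrix.map_apply, Matrix.one_apply, apply_ite φ]
    have h0 : ((charmatrix (0 : Matrix V V ℤ)).map φ) = D := by
      ext i j
      rcases eq_or_ne i j with rfl | h
      · simp [charmatrix_apply_eq, Matrix.map_apply, hx, hD]
      · simp [charmatrix_apply_ne _ _ _ h, Matrix.map_apply, hD, Matrix.diagonal_apply_ne _ h]
    rw [charmatrix_fromBlocks, Matrix.fromBlocks_map, h1, h0]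
  have hxx : x * x⁻¹ = 1 := mul_inv_cancel₀ hx0
  have hxx' : x⁻¹ * x = 1 := inv_mul_cancel₀ hx0
  letI : Invertible D := ⟨Matrix.diagonal (fun _ : V => x⁻¹), by
      rw [Matrix.diagonal_mul_diagonal]; simp [hxx, hxx'], by
      rw [Matrix.diagonal_mul_diagonal]; simp [hxx, hxx']⟩
  have hdet : φ ((Matrix.fromBlocks A (1 : Matrix V V ℤ) (1 : Matrix V V ℤ)
        (0 : Matrix V V ℤ)).charpoly)
      = D.det * (P - Matrix.diagonal (fun _ : V => x⁻¹)).det := by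
    rw [Matrix.charpoly, RingHom.map_det, RingHom.mapMatrix_apply, hcm,
      Matrix.det_fromBlocks₂₂]
    congr 2
    show P - (-1) * Matrix.diagonal (fun _ : V => x⁻¹) * (-1) = _
    rw [neg_one_mul, mul_neg_one, neg_neg]
  rw [hdet]
  have hDdet : D.det = x ^ n := by
    rw [hD, Matrix.det_diagonal, Finset.prod_const, Finset.card_univ, hn]
  set ψ : Polynomial ℤ →+* K := eval₂RingHom (Int.castRingHom K) (x - x⁻¹) with hψ
  have hmat : P - Matrix.diagonal (fun _ : V => x⁻¹) = (charmatrix A).map ψ := by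
    ext i j
    rcases eq_or_ne i j with rfl | h
    · simp only [hP, Matrix.sub_apply, Matrix.map_apply, charmatrix_apply_eq, _root_.map_sub,
        hC, Matrix.diagonal_apply_eq, hψ, coe_eval₂RingHom, eval₂_sub, eval₂_X,
        eval₂_C, Int.coe_castRingHom, ← hx]
      ring
    · simp [hP, Matrix.map_apply, charmatrix_apply_ne _ _ _ h, hC,
        Matrix.diagonal_apply_ne _ h]
  have hψdet : ((charmatrix A).map ψ).det = ψ A.charpoly := by
    rw [Matrix.charpoly, RingHom.map_det, RingHom.mapMatrix_apply]
  have hdeg : A.charpoly.natDegree < n + 1 := by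
    rw [Matrix.charpoly_natDegree_eq_dim]; omega
  rw [hmat, hψdet, hψ, coe_eval₂RingHom, eval₂_eq_sum_range' _ hdeg, hDdet,
    Finset.mul_sum]
  refine Finset.sum_congr rfl fun j hj => ?_
  have hj' : j ≤ n := Nat.lt_succ_iff.mp (Finset.mem_range.mp hj)
  have hy : (x^2 - 1) * x⁻¹ = x - x⁻¹ := by
    rw [sub_mul, one_mul, pow_two, mul_assoc, mul_inv_cancel₀ hx0, mul_one]
  have hxj : x ^ n * (x⁻¹) ^ j = x ^ (n - j) := by
    rw [← Nat.sub_add_cancel hj', pow_add, mul_assoc, ← mul_pow,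
      mul_inv_cancel₀ hx0, one_pow, mul_one, Nat.sub_add_cancel hj']
  rw [← hy, mul_pow]
  have hre : x ^ n * ((A.charpoly.coeff j : K) * ((x^2-1)^j * (x⁻¹)^j))
      = (A.charpoly.coeff j : K) * (x^2-1)^j * (x^n * (x⁻¹)^j) := by ring
  simp only [eq_intCast]
  rw [hre, hxj]

def hairingPairSum (V : Type*) : V × Bool ≃ V ⊕ V where
  toFun p := if p.2 then Sum.inr p.1 else Sum.inl p.1
  invFun s := Sum.elim (fun u => (u, false)) (fun u => (u, true)) s
  left_inv := by rintro ⟨u, (_|_)⟩ <;> rfl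
  right_inv := by rintro (u|u) <;> rfl

lemma hairing_adj_reindex {V : Type*} [Fintype V] [DecidableEq V] (G : SimpleGraph V)
    [DecidableRel G.Adj] [DecidableRel (hairing G).Adj] :
    Matrix.reindex (hairingPairSum V) (hairingPairSum V) (SimpleGraph.adjMatrix ℤ (hairing G)) =
      Matrix.fromBlocks (SimpleGraph.adjMatrix ℤ G) (1 : Matrix V V ℤ)
        (1 : Matrix V V ℤ) (0 : Matrix V V ℤ) := by
  ext i j
  rcases i with u | u <;> rcases j with v | v <;>
    simp [Matrix.reindex_apply, Matrix.submatrix_apply, hairingPairSum,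
      SimpleGraph.adjMatrix_apply, Matrix.one_apply] <;> simp [hairing]

lemma charPoly_hairing {V : Type*} [Finite V] (G : SimpleGraph V) :
    charPoly (hairing G) = ∑ j ∈ Finset.range (Nat.card V + 1),
      C ((charPoly G).coeff j) * (X^2 - 1)^j * X^(Nat.card V - j) := by
  letI := Fintype.ofFinite V
  letI := Classical.decEq V
  letI := Classical.decRel G.Adj
  letI := Fintype.ofFinite (V × Bool)
  letI := Classical.decEq (V × Bool)
  letI := Classical.decRel (hairing G).Adj
  have h1 : charPoly (hairing G) = (SimpleGraph.adjMatrix ℤ (hairing G)).charpoly := rfl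
  have h2 : charPoly G = (SimpleGraph.adjMatrix ℤ G).charpoly := rfl
  have h3 : Nat.card V = Fintype.card V := Nat.card_eq_fintype_card
  rw [h1, ← Matrix.charpoly_reindex (hairingPairSum V)
      (SimpleGraph.adjMatrix ℤ (hairing G)),
    hairing_adj_reindex G, hairing_aux_blocks, h2, h3]

end Aux

/-- The hairing of any finite simple graph is absolutely palindromic. -/
theorem hairing_isAbsPalindromic {V : Type*} [Finite V] (G : SimpleGraph V) :
    IsAbsPalindromic (hairing G) := by
  intro i hi
  set n := Nat.card V with hn
  have hcard : Nat.card (V × Bool) = 2 * n := by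
    simp [Nat.card_prod, hn, mul_comm]
  rw [hcard] at hi ⊢
  rw [charPoly_hairing]
  simp only [mul_assoc, finset_sum_coeff, coeff_C_mul, ← hn]
  have hsym : ∑ j ∈ Finset.range (n + 1),
      (charPoly G).coeff j * ((X^2 - 1 : ℤ[X])^j * X^(n-j)).coeff (2*n - i)
      = (-1)^(n+i) * ∑ j ∈ Finset.range (n + 1),
      (charPoly G).coeff j * ((X^2 - 1 : ℤ[X])^j * X^(n-j)).coeff i := by
    rw [Finset.mul_sum]
    refine Finset.sum_congr rfl fun j hj => ?_
    rw [hairing_aux_sym n j i (Nat.lt_succ_iff.mp (Finset.mem_range.mp hj)) hi]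
    ring
  rw [hsym, abs_mul, abs_pow, abs_neg, abs_one, one_pow, one_mul]
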